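/- Let G be a finite connected locally connected graph of diameter two, let x be a vertex, and let ℓ = line(v,w) for distinct vertices v, w. Then: (i) for every neighbor u of x with u ∉ [v]_x ∪ [w]_x ∪ {v,w}, either [u]_x ⊆ ℓ or [u]_x ∩ ℓ = ∅; (ii) if v and w are neighbors of x and v,w are adjacent, then [v]_x ∪ [w]_x ⊆ ℓ; (iii) if v and w are neighbors of x and v,w are not adjacent, then ([v]_x ∪ [w]_x) ∩ ℓ = {v,w}. -/

import Mathlib

open SimpleGraph

/-- The line defined by two vertices `a` and `b` of a graph: `{a, b}` together with all
vertices `c` lying on a shortest path through `a`, `b` and `c` (in some order). -/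
def SimpleGraph.line {V : Type*} (G : SimpleGraph V) (a b : V) : Set V :=
  {a, b} ∪ {c | G.dist a b = G.dist a c + G.dist c b ∨
                G.dist a c = G.dist a b + G.dist b c ∨
                G.dist b c = G.dist b a + G.dist a c}

/-- The set of all lines of a graph. -/
def SimpleGraph.lineSet {V : Type*} (G : SimpleGraph V) : Set (Set V) :=
  {s | ∃ a b : V, a ≠ b ∧ s = G.line a b}

/-- A graph is locally connected if the subgraph induced on each neighborhood is connected. -/
def SimpleGraph.LocallyConnected {V : Type*} (G : SimpleGraph V) : Prop :=
  ∀ v : V, (G.induce (G.neighborSet v)).Connected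

/-- The class `[u]_z`: all vertices `w ≠ z` defining the same line with `z` as `u` does. -/
def SimpleGraph.lineClass {V : Type*} (G : SimpleGraph V) (z u : V) : Set V :=
  {w | w ≠ z ∧ G.line z w = G.line z u}

section Aux

variable {V : Type*} {G : SimpleGraph V}

lemma left_mem_line (a b : V) : a ∈ G.line a b := Or.inl (Or.inl rfl)

lemma right_mem_line (a b : V) : b ∈ G.line a b := Or.inl (Or.inr rfl)

lemma aux_dist_le_two (hdiam : G.diam = 2) (a b : V) : G.dist a b ≤ 2 := by
  have h : G.ediam ≠ ⊤ := ediam_ne_top_of_diam_ne_zero (by rw [hdiam]; omega)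
  have h2 := dist_le_diam (G := G) h (u := a) (v := b)
  rw [hdiam] at h2
  exact h2

lemma aux_dist_two (hG : G.Connected) (hdiam : G.diam = 2) {a b : V} (hne : a ≠ b)
    (hadj : ¬ G.Adj a b) : G.dist a b = 2 := by
  have h1 := aux_dist_le_two hdiam a b
  have h2 : G.dist a b ≠ 0 := fun h => hne (hG.dist_eq_zero_iff.mp h)
  have h3 : G.dist a b ≠ 1 := fun h => hadj (dist_eq_one_iff_adj.mp h)
  omega

/-- Membership in the line of two adjacent vertices. -/
lemma mem_line_adj (hG : G.Connected) (hdiam : G.diam = 2) {x u : V} (hxu : G.Adj x u)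
    (c : V) : c ∈ G.line x u ↔ G.dist c x ≠ G.dist c u := by
  have h1 : G.dist x u = 1 := dist_eq_one_iff_adj.mpr hxu
  have h1' : G.dist u x = 1 := by rw [dist_comm]; exact h1
  simp only [SimpleGraph.line, Set.mem_union, Set.mem_insert_iff, Set.mem_singleton_iff,
    Set.mem_setOf_eq]
  by_cases hcx : c = x
  · subst hcx
    refine iff_of_true (Or.inl (Or.inl rfl)) ?_
    rw [SimpleGraph.dist_self, dist_comm]
    omega
  by_cases hcu : c = u
  · subst hcu
    refine iff_of_true (Or.inl (Or.inr rfl)) ?_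
    rw [SimpleGraph.dist_self]
    omega
  have h0x : G.dist c x ≠ 0 := fun h => hcx (hG.dist_eq_zero_iff.mp h)
  have h0u : G.dist c u ≠ 0 := fun h => hcu (hG.dist_eq_zero_iff.mp h)
  have hbx := aux_dist_le_two hdiam c x
  have hbu := aux_dist_le_two hdiam c u
  rw [show G.dist x c = G.dist c x from dist_comm, show G.dist u c = G.dist c u from dist_comm]
  constructor
  · rintro ((h | h) | h)
    · exact absurd h hcx
    · exact absurd h hcu
    · omega
  · intro h
    right
    omega

/-- Membership in the line of two vertices at distance two. -/
lemma mem_line_two (hG : G.Connected) (hdiam : G.diam = 2) {x u : V}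
    (h2 : G.dist x u = 2) (c : V) :
    c ∈ G.line x u ↔ c = x ∨ c = u ∨ (G.Adj x c ∧ G.Adj c u) := by
  have h2' : G.dist u x = 2 := by rw [dist_comm]; exact h2
  simp only [SimpleGraph.line, Set.mem_union, Set.mem_insert_iff, Set.mem_singleton_iff,
    Set.mem_setOf_eq]
  by_cases hcx : c = x
  · exact iff_of_true (Or.inl (Or.inl hcx)) (Or.inl hcx)
  by_cases hcu : c = u
  · exact iff_of_true (Or.inl (Or.inr hcu)) (Or.inr (Or.inl hcu))
  have h0x : G.dist c x ≠ 0 := fun h => hcx (hG.dist_eq_zero_iff.mp h)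
  have h0u : G.dist c u ≠ 0 := fun h => hcu (hG.dist_eq_zero_iff.mp h)
  have hbx := aux_dist_le_two hdiam c x
  have hbu := aux_dist_le_two hdiam c u
  have hax : G.Adj x c ↔ G.dist c x = 1 := by rw [← dist_eq_one_iff_adj, dist_comm]
  have hacu : G.Adj c u ↔ G.dist c u = 1 := dist_eq_one_iff_adj.symm
  rw [hax, hacu,
    show G.dist x c = G.dist c x from dist_comm, show G.dist u c = G.dist c u from dist_comm]
  constructor
  · rintro ((h | h) | h)
    · exact absurd h hcx
    · exact absurd h hcu
    · refine Or.inr (Or.inr ?_)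
      omega
  · rintro (h | h | h)
    · exact absurd h hcx
    · exact absurd h hcu
    · refine Or.inr ?_
      omega

/-- In a locally connected graph, two distinct neighbors of `a` yield, for either of them,
a common neighbor with `a`. -/
lemma exists_common_nbr (hlc : G.LocallyConnected) {a u z : V} (hu : G.Adj a u)
    (hz : G.Adj a z) (hne : u ≠ z) : ∃ q, G.Adj a q ∧ G.Adj u q := by
  obtain ⟨p⟩ := (hlc a).preconnected ⟨u, hu⟩ ⟨z, hz⟩
  have hlen : p.length ≠ 0 := by
    intro h
    exact hne (by simpa using congrArg Subtype.val (SimpleGraph.Walk.eq_of_length_eq_zero h))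
  have hadj := p.adj_getVert_succ (i := 0) (by omega)
  rw [SimpleGraph.Walk.getVert_zero] at hadj
  exact ⟨(p.getVert 1).1, (p.getVert 1).2, by simpa using hadj⟩

lemma exists_mid (hG : G.Connected) {a b : V} (h : G.dist a b = 2) :
    ∃ m, G.Adj a m ∧ G.Adj m b := by
  obtain ⟨p, hp⟩ := (hG a b).exists_walk_length_eq_dist
  rw [h] at hp
  cases p with
  | nil => simp at hp
  | cons h1 q =>
    cases q with
    | nil => simp at hp
    | cons h2 r =>
      have hr : r.length = 0 := by
        simpa using hp
      have := SimpleGraph.Walk.eq_of_length_eq_zero hr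
      subst this
      exact ⟨_, h1, h2⟩

/-- Every vertex of a connected locally connected graph of diameter two has a second
neighbor besides any given one. -/
lemma exists_other_nbr (hG : G.Connected) (hlc : G.LocallyConnected) (hdiam : G.diam = 2)
    {a u : V} (hau : G.Adj a u) : ∃ z, G.Adj a z ∧ z ≠ u := by
  by_contra hall
  push_neg at hall
  have hVsub : ∀ t, t ≠ a → t ≠ u → G.Adj t u := by
    intro t hta htu
    have hd := aux_dist_le_two hdiam a t
    have h0 : G.dist a t ≠ 0 := fun h => hta (hG.dist_eq_zero_iff.mp h).symm
    have : G.dist a t = 1 ∨ G.dist a t = 2 := by omega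
    rcases this with h | h
    · exact absurd (hall t (dist_eq_one_iff_adj.mp h)) htu
    · obtain ⟨m, h1, h2⟩ := exists_mid hG h
      rw [hall m h1] at h2
      exact h2.symm
  by_cases hz : ∃ z, G.Adj u z ∧ z ≠ a
  · obtain ⟨z, huz, hza⟩ := hz
    obtain ⟨q, hq1, hq2⟩ := exists_common_nbr hlc hau.symm huz (Ne.symm hza)
    exact hq1.ne (hall q hq2).symm
  · push_neg at hz
    have hsub : ∀ t : V, t = a ∨ t = u := by
      intro t
      by_cases h1 : t = a
      · exact Or.inl h1
      by_cases h2 : t = u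
      · exact Or.inr h2
      exact absurd (hz t (hVsub t h1 h2).symm) h1
    have : Nonempty V := ⟨a⟩
    obtain ⟨p, q, hpq⟩ := G.exists_dist_eq_diam
    rw [hdiam] at hpq
    rcases hsub p with rfl | rfl <;> rcases hsub q with rfl | rfl
    · rw [SimpleGraph.dist_self] at hpq; omega
    · rw [dist_eq_one_iff_adj.mpr hau] at hpq; omega
    · rw [dist_eq_one_iff_adj.mpr hau.symm] at hpq; omega
    · rw [SimpleGraph.dist_self] at hpq; omega

/-- Structure of the class `[u]_x` of a neighbor `u` of `x`: its elements are `u` itself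
together with the non-adjacent twins of `u`. -/
lemma class_struct (hG : G.Connected) (hlc : G.LocallyConnected) (hdiam : G.diam = 2)
    {x u : V} (hxu : G.Adj x u) {u' : V} (hu' : u' ∈ G.lineClass x u) :
    u' = u ∨ (u' ≠ u ∧ ¬ G.Adj u u' ∧ ∀ c, G.Adj c u ↔ G.Adj c u') := by
  obtain ⟨hux, hline⟩ := hu'
  have hadj' : G.Adj x u' := by
    by_contra hnadj
    have h2 : G.dist x u' = 2 := aux_dist_two hG hdiam (Ne.symm hux) hnadj
    have humem : u ∈ G.line x u' := by
      rw [hline, mem_line_adj hG hdiam hxu]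
      rw [dist_eq_one_iff_adj.mpr hxu.symm, SimpleGraph.dist_self]
      omega
    rw [mem_line_two hG hdiam h2] at humem
    rcases humem with h | h | ⟨-, huu'⟩
    · exact hxu.ne h.symm
    · exact hnadj (h ▸ hxu)
    obtain ⟨z, hz, hzu⟩ := exists_other_nbr hG hlc hdiam huu'.symm
    obtain ⟨q, hq1, hq2⟩ := exists_common_nbr hlc huu'.symm hz (Ne.symm hzu)
    have hqx : q ≠ x := fun h => hnadj (h ▸ hq1).symm
    by_cases hxq : G.Adj x q
    · have hmem : q ∈ G.line x u' := by
        rw [mem_line_two hG hdiam h2]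
        exact Or.inr (Or.inr ⟨hxq, hq1.symm⟩)
      rw [hline, mem_line_adj hG hdiam hxu] at hmem
      rw [dist_eq_one_iff_adj.mpr hxq.symm, dist_eq_one_iff_adj.mpr hq2.symm] at hmem
      exact hmem rfl
    · have hmem : q ∉ G.line x u' := by
        rw [mem_line_two hG hdiam h2]
        rintro (h | h | ⟨h, -⟩)
        · exact hqx h
        · exact hq1.ne' h
        · exact hxq h
      rw [hline, mem_line_adj hG hdiam hxu] at hmem
      push_neg at hmem
      rw [show G.dist q u = 1 from dist_eq_one_iff_adj.mpr hq2.symm] at hmem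
      exact hxq (dist_eq_one_iff_adj.mp hmem).symm
  by_cases hequ : u' = u
  · exact Or.inl hequ
  have humem' : u' ∈ G.line x u := by
    rw [← hline]; exact right_mem_line x u'
  have hnadj2 : ¬ G.Adj u u' := by
    have h := (mem_line_adj hG hdiam hxu u').mp humem'
    rw [dist_eq_one_iff_adj.mpr hadj'.symm] at h
    intro hh
    exact h (dist_eq_one_iff_adj.mpr hh.symm).symm
  refine Or.inr ⟨hequ, hnadj2, fun c => ?_⟩
  by_cases hcx : c = x
  · subst hcx; exact iff_of_true hxu hadj'
  by_cases hcu : c = u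
  · rw [hcu]; exact iff_of_false G.irrefl hnadj2
  by_cases hcu' : c = u'
  · rw [hcu']; exact iff_of_false (fun h => hnadj2 h.symm) G.irrefl
  have hiff : (G.dist c x ≠ G.dist c u) ↔ (G.dist c x ≠ G.dist c u') := by
    rw [← mem_line_adj hG hdiam hxu c, ← mem_line_adj hG hdiam hadj' c, hline]
  have h0x : G.dist c x ≠ 0 := fun h => hcx (hG.dist_eq_zero_iff.mp h)
  have h0u : G.dist c u ≠ 0 := fun h => hcu (hG.dist_eq_zero_iff.mp h)
  have h0u' : G.dist c u' ≠ 0 := fun h => hcu' (hG.dist_eq_zero_iff.mp h)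
  have hbx := aux_dist_le_two hdiam c x
  have hbu := aux_dist_le_two hdiam c u
  have hbu' := aux_dist_le_two hdiam c u'
  rw [← dist_eq_one_iff_adj (u := c) (v := u), ← dist_eq_one_iff_adj (u := c) (v := u')]
  omega

/-- Twins not among `{v, w}` lie on the line of `v` and `w` simultaneously. -/
lemma twin_transfer (hG : G.Connected) (hdiam : G.diam = 2) {v w : V} (hvw : v ≠ w)
    {u u' : V} (huv : u ≠ v) (huw : u ≠ w) (hu'v : u' ≠ v) (hu'w : u' ≠ w)
    (twin : ∀ c, G.Adj c u ↔ G.Adj c u') :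
    u ∈ G.line v w ↔ u' ∈ G.line v w := by
  by_cases hadj : G.Adj v w
  · rw [mem_line_adj hG hdiam hadj, mem_line_adj hG hdiam hadj]
    have h1 : G.dist u v = G.dist u' v := by
      by_cases h : G.Adj v u
      · rw [dist_eq_one_iff_adj.mpr h.symm, dist_eq_one_iff_adj.mpr ((twin v).mp h).symm]
      · rw [aux_dist_two hG hdiam huv (fun hh => h hh.symm),
          aux_dist_two hG hdiam hu'v (fun hh => h ((twin v).mpr hh.symm))]
    have h2 : G.dist u w = G.dist u' w := by
      by_cases h : G.Adj w u
      · rw [dist_eq_one_iff_adj.mpr h.symm, dist_eq_one_iff_adj.mpr ((twin w).mp h).symm]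
      · rw [aux_dist_two hG hdiam huw (fun hh => h hh.symm),
          aux_dist_two hG hdiam hu'w (fun hh => h ((twin w).mpr hh.symm))]
    rw [h1, h2]
  · have h2 : G.dist v w = 2 := aux_dist_two hG hdiam hvw hadj
    rw [mem_line_two hG hdiam h2, mem_line_two hG hdiam h2]
    constructor
    · rintro (h | h | ⟨ha, hb⟩)
      · exact absurd h huv
      · exact absurd h huw
      · exact Or.inr (Or.inr ⟨(twin v).mp ha, ((twin w).mp hb.symm).symm⟩)
    · rintro (h | h | ⟨ha, hb⟩)
      · exact absurd h hu'v
      · exact absurd h hu'w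
      · exact Or.inr (Or.inr ⟨(twin v).mpr ha, ((twin w).mpr hb.symm).symm⟩)

end Aux

theorem line_description_diam_two {V : Type*} [Fintype V] (G : SimpleGraph V)
    (hG : G.Connected) (hlc : G.LocallyConnected) (hdiam : G.diam = 2)
    (x : V) {v w : V} (hvw : v ≠ w) :
    (∀ u : V, G.Adj x u → u ∉ G.lineClass x v ∪ G.lineClass x w ∪ {v, w} →
      G.lineClass x u ⊆ G.line v w ∨ G.lineClass x u ∩ G.line v w = ∅) ∧
    (G.Adj x v → G.Adj x w → G.Adj v w →
      G.lineClass x v ∪ G.lineClass x w ⊆ G.line v w) ∧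
    (G.Adj x v → G.Adj x w → ¬ G.Adj v w →
      (G.lineClass x v ∪ G.lineClass x w) ∩ G.line v w = {v, w}) := by
  refine ⟨?_, ?_, ?_⟩
  · -- part (i)
    intro u hxu hnot
    simp only [Set.mem_union, Set.mem_insert_iff, Set.mem_singleton_iff, not_or] at hnot
    obtain ⟨⟨h1, h2⟩, h3, h4⟩ := hnot
    have avoid : ∀ u' ∈ G.lineClass x u, u' ≠ v ∧ u' ≠ w := by
      intro u' hu'
      obtain ⟨hu'x, hu'line⟩ := hu'
      constructor
      · intro h
        exact h1 ⟨hxu.ne', (h ▸ hu'line).symm⟩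
      · intro h
        exact h2 ⟨hxu.ne', (h ▸ hu'line).symm⟩
    have memiff : ∀ u' ∈ G.lineClass x u, (u' ∈ G.line v w ↔ u ∈ G.line v w) := by
      intro u' hu'
      rcases class_struct hG hlc hdiam hxu hu' with rfl | ⟨hne, hnadj, twin⟩
      · exact Iff.rfl
      · obtain ⟨hv', hw'⟩ := avoid u' hu'
        exact (twin_transfer hG hdiam hvw h3 h4 hv' hw' twin).symm
    by_cases hm : u ∈ G.line v w
    · left
      intro u' hu'
      exact (memiff u' hu').mpr hm
    · right
      apply Set.eq_empty_iff_forall_notMem.mpr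
      rintro u' ⟨hc1, hc2⟩
      exact hm ((memiff u' hc1).mp hc2)
  · -- part (ii)
    intro hxv hxw hadjvw
    rintro c (hc | hc)
    · rcases class_struct hG hlc hdiam hxv hc with rfl | ⟨hne, hnadj, twin⟩
      · exact left_mem_line _ _
      · rw [mem_line_adj hG hdiam hadjvw,
          aux_dist_two hG hdiam hne (fun hh => hnadj hh.symm),
          dist_eq_one_iff_adj.mpr ((twin w).mp hadjvw.symm).symm]
        omega
    · rcases class_struct hG hlc hdiam hxw hc with rfl | ⟨hne, hnadj, twin⟩
      · exact right_mem_line _ _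
      · rw [mem_line_adj hG hdiam hadjvw,
          dist_eq_one_iff_adj.mpr ((twin v).mp hadjvw).symm,
          aux_dist_two hG hdiam hne (fun hh => hnadj hh.symm)]
        omega
  · -- part (iii)
    intro hxv hxw hnadjvw
    have h2 : G.dist v w = 2 := aux_dist_two hG hdiam hvw hnadjvw
    ext c
    simp only [Set.mem_inter_iff, Set.mem_union, Set.mem_insert_iff, Set.mem_singleton_iff]
    constructor
    · rintro ⟨hc1 | hc1, hc2⟩
      · rcases class_struct hG hlc hdiam hxv hc1 with rfl | ⟨hne, hnadj, twin⟩
        · exact Or.inl rfl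
        · rw [mem_line_two hG hdiam h2] at hc2
          rcases hc2 with h | h | ⟨ha, hb⟩
          · exact Or.inl h
          · exact Or.inr h
          · exact absurd ha hnadj
      · rcases class_struct hG hlc hdiam hxw hc1 with rfl | ⟨hne, hnadj, twin⟩
        · exact Or.inr rfl
        · rw [mem_line_two hG hdiam h2] at hc2
          rcases hc2 with h | h | ⟨ha, hb⟩
          · exact Or.inl h
          · exact Or.inr h
          · exact absurd hb.symm hnadj
    · rintro (rfl | rfl)
      · exact ⟨Or.inl ⟨hxv.ne', rfl⟩, left_mem_line _ _⟩
      · exact ⟨Or.inr ⟨hxw.ne', rfl⟩, right_mem_line _ _⟩
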